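/- For every Borel probability measure G on (0,∞), there exists a Borel probability measure G' supported on the finite set {x_1, ..., x_m, W^{-1}(y_1 | x), ..., W^{-1}(y_n | x)} such that L(G') ≥ L(G), where W^{-1}(y_j | x) = min{x_i : W(x_i) = W(W^{-1}(y_j))} if some x_i satisfies W(x_i) = W(W^{-1}(y_j)), and W^{-1}(y_j | x) = W^{-1}(y_j) otherwise. -/

import Mathlib

open MeasureTheory Finset

/-- For every Borel probability measure `G` on `(0,∞)`, there exists a
Borel probability measure `G'` supported on the finite set
`{x_1, ..., x_m, W⁻¹(y_1|x), ..., W⁻¹(y_n|x)}` such that `L(G') ≥ L(G)`, where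
`W⁻¹(y_j|x) = min{x_i : W(x_i) = W(W⁻¹(y_j))}` if some `x_i` satisfies
`W(x_i) = W(W⁻¹(y_j))`, and `W⁻¹(y_j|x) = W⁻¹(y_j)` otherwise. -/
theorem stmt12 (W : ℝ → ℝ) (hWpos : ∀ v : ℝ, 0 < v → 0 < W v)
    (hWmono : MonotoneOn W (Set.Ioi 0))
    (hWrc : ∀ v : ℝ, 0 < v → ContinuousWithinAt W (Set.Ici v) v)
    (m n : ℕ) (hmn : 1 ≤ m + n)
    (x : Fin m → ℝ) (hx : ∀ i, 0 < x i) (y : Fin n → ℝ) (hy : ∀ j, 0 < y j)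
    (Winv : Fin n → ℝ)
    (hWinv : ∀ j, IsLeast {v : ℝ | 0 < v ∧ y j ≤ W v} (Winv j))
    (Winvx : Fin n → ℝ)
    (hWinvx₁ : ∀ j, (∃ i, W (x i) = W (Winv j)) →
      IsLeast {t : ℝ | (∃ i, x i = t) ∧ W t = W (Winv j)} (Winvx j))
    (hWinvx₂ : ∀ j, (¬ ∃ i, W (x i) = W (Winv j)) → Winvx j = Winv j)
    (G : Measure ℝ) [IsProbabilityMeasure G] (hG : G (Set.Iic 0) = 0) :
    ∃ G' : Measure ℝ, IsProbabilityMeasure G' ∧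
      G' ((Set.range x ∪ Set.range Winvx)ᶜ) = 0 ∧
      (∏ i, G {x i}) *
          (∏ j, ∫⁻ v in {v : ℝ | 0 < v ∧ y j ≤ W v}, ENNReal.ofReal (W v)⁻¹ ∂G)
        ≤ (∏ i, G' {x i}) *
          (∏ j, ∫⁻ v in {v : ℝ | 0 < v ∧ y j ≤ W v}, ENNReal.ofReal (W v)⁻¹ ∂G') := by
  classical
  set S : Set ℝ := Set.range x ∪ Set.range Winvx with hSdef
  have hWinv_pos : ∀ j, 0 < Winv j := fun j => (hWinv j).1.1
  have hWinv_le : ∀ j, y j ≤ W (Winv j) := fun j => (hWinv j).1.2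
  -- facts about Winvx
  have hWinvx_W : ∀ j, W (Winvx j) = W (Winv j) := by
    intro j
    by_cases h : ∃ i, W (x i) = W (Winv j)
    · exact (hWinvx₁ j h).1.2
    · rw [hWinvx₂ j h]
  have hWinvx_ge : ∀ j, Winv j ≤ Winvx j := by
    intro j
    by_cases h : ∃ i, W (x i) = W (Winv j)
    · obtain ⟨⟨i, hi⟩, hW⟩ := (hWinvx₁ j h).1
      have hpos : 0 < Winvx j := hi ▸ hx i
      exact (hWinv j).2 ⟨hpos, by rw [hW]; exact hWinv_le j⟩
    · rw [hWinvx₂ j h]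
  have hWinvx_pos : ∀ j, 0 < Winvx j := fun j => lt_of_lt_of_le (hWinv_pos j) (hWinvx_ge j)
  -- the region of integration is just Ici (Winv j)
  have hA : ∀ j, {v : ℝ | 0 < v ∧ y j ≤ W v} = Set.Ici (Winv j) := by
    intro j
    ext v
    constructor
    · intro hv; exact (hWinv j).2 hv
    · intro hv
      have hv0 : 0 < v := lt_of_lt_of_le (hWinv_pos j) hv
      exact ⟨hv0, le_trans (hWinv_le j)
        (hWmono (Set.mem_Ioi.2 (hWinv_pos j)) (Set.mem_Ioi.2 hv0) hv)⟩
  -- tie lemma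
  have tie : ∀ k l, Winv k = Winv l → Winvx k = Winvx l := by
    intro k l hkl
    have hW : W (Winv k) = W (Winv l) := by rw [hkl]
    by_cases hk : ∃ i, W (x i) = W (Winv k)
    · have hl : ∃ i, W (x i) = W (Winv l) := by rw [← hW]; exact hk
      have h1 := hWinvx₁ k hk
      rw [hW] at h1
      exact h1.unique (hWinvx₁ l hl)
    · have hl : ¬ ∃ i, W (x i) = W (Winv l) := by rw [← hW]; exact hk
      rw [hWinvx₂ k hk, hWinvx₂ l hl, hkl]
  -- a base point in S
  obtain ⟨s₀, hs₀⟩ : ∃ s, s ∈ S := by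
    rcases Nat.eq_zero_or_pos m with hm | hm
    · have hn : 0 < n := by omega
      exact ⟨Winvx ⟨0, hn⟩, Or.inr ⟨⟨0, hn⟩, rfl⟩⟩
    · exact ⟨x ⟨0, hm⟩, Or.inl ⟨⟨0, hm⟩, rfl⟩⟩
  -- maximizer existence
  have hex : ∀ v : ℝ, (∃ k : Fin n, Winv k ≤ v) →
      ∃ k : Fin n, Winv k ≤ v ∧ ∀ l, Winv l ≤ v → Winv l ≤ Winv k := by
    intro v ⟨k0, hk0⟩
    obtain ⟨k, hk, hmax⟩ := Finset.exists_max_image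
      (Finset.univ.filter fun k => Winv k ≤ v) Winv ⟨k0, by simp [hk0]⟩
    exact ⟨k, (Finset.mem_filter.1 hk).2, fun l hl => hmax l (by simp [hl])⟩
  -- the pushing map on non-atoms
  set g : ℝ → ℝ := fun v =>
    if h : ∃ k : Fin n, Winv k ≤ v then Winvx (hex v h).choose else s₀ with hgdef
  -- the sets D k on which g is constant
  set D : Fin n → Set ℝ := fun k =>
    Set.Ici (Winv k) ∩ ⋂ l, {v | Winv l ≤ v → Winv l ≤ Winv k} with hDdef
  have hDmeas : ∀ k, MeasurableSet (D k) := by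
    intro k
    apply (measurableSet_Ici).inter
    apply MeasurableSet.iInter
    intro l
    have : {v : ℝ | Winv l ≤ v → Winv l ≤ Winv k}
        = (Set.Ici (Winv l))ᶜ ∪ {_v : ℝ | Winv l ≤ Winv k} := by
      ext v; simp [imp_iff_not_or, Set.mem_Ici]
    rw [this]
    exact (measurableSet_Ici.compl).union (MeasurableSet.const _)
  have hgD : ∀ k v, v ∈ D k → g v = Winvx k := by
    intro k v hv
    obtain ⟨hv1, hv2⟩ := hv
    have hv2' : ∀ l, Winv l ≤ v → Winv l ≤ Winv k := by
      intro l hl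
      exact (Set.mem_iInter.1 hv2 l) hl
    have h : ∃ k : Fin n, Winv k ≤ v := ⟨k, hv1⟩
    have hspec := (hex v h).choose_spec
    have heq : Winv (hex v h).choose = Winv k :=
      le_antisymm (hv2' _ hspec.1) (hspec.2 k hv1)
    rw [hgdef]
    simp only [dif_pos h]
    exact tie _ _ heq
  have hgmax : ∀ v (h : ∃ k : Fin n, Winv k ≤ v), v ∈ D (hex v h).choose := by
    intro v h
    have hspec := (hex v h).choose_spec
    exact ⟨hspec.1, Set.mem_iInter.2 fun l hl => hspec.2 l hl⟩
  have hgmeas : Measurable g := by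
    intro t ht
    have : g ⁻¹' t = (⋃ k, if Winvx k ∈ t then D k else ∅)
        ∪ (if s₀ ∈ t then (⋃ k, Set.Ici (Winv k))ᶜ else ∅) := by
      ext v
      simp only [Set.mem_preimage, Set.mem_union, Set.mem_iUnion]
      constructor
      · intro hv
        by_cases h : ∃ k : Fin n, Winv k ≤ v
        · left
          refine ⟨(hex v h).choose, ?_⟩
          have hgv : g v = Winvx (hex v h).choose := hgD _ _ (hgmax v h)
          rw [if_pos (hgv ▸ hv)]
          exact hgmax v h
        · right
          have hgv : g v = s₀ := by rw [hgdef]; simp only [dif_neg h]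
          rw [if_pos (hgv ▸ hv)]
          simp only [Set.mem_compl_iff, Set.mem_iUnion, Set.mem_Ici]
          exact h
      · rintro (⟨k, hk⟩ | hk)
        · by_cases hkt : Winvx k ∈ t
          · rw [if_pos hkt] at hk
            rw [hgD k v hk]; exact hkt
          · rw [if_neg hkt] at hk; exact absurd hk (Set.notMem_empty v)
        · by_cases hst : s₀ ∈ t
          · rw [if_pos hst] at hk
            have h : ¬ ∃ k : Fin n, Winv k ≤ v := by
              simpa [Set.mem_compl_iff, Set.mem_iUnion, Set.mem_Ici] using hk
            have hgv : g v = s₀ := by rw [hgdef]; simp only [dif_neg h]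
            rw [hgv]; exact hst
          · rw [if_neg hst] at hk; exact absurd hk (Set.notMem_empty v)
    rw [this]
    apply MeasurableSet.union
    · apply MeasurableSet.iUnion
      intro k
      split_ifs
      · exact hDmeas k
      · exact MeasurableSet.empty
    · split_ifs
      · exact (MeasurableSet.iUnion fun k => measurableSet_Ici).compl
      · exact MeasurableSet.empty
  -- the full map
  set f : ℝ → ℝ := fun v => if v ∈ Set.range x then v else g v with hfdef
  have hfmeas : Measurable f := by
    apply Measurable.ite _ measurable_id hgmeas
    exact (Set.finite_range x).measurableSet
  have hfx : ∀ i, f (x i) = x i := by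
    intro i; rw [hfdef]; simp only [if_pos (Set.mem_range_self i)]
  have hfS : ∀ v, f v ∈ S := by
    intro v
    by_cases h : v ∈ Set.range x
    · simp only [hfdef, if_pos h]; exact Or.inl h
    · simp only [hfdef, if_neg h]
      by_cases h2 : ∃ k : Fin n, Winv k ≤ v
      · rw [hgdef]; simp only [dif_pos h2]
        exact Or.inr (Set.mem_range_self _)
      · rw [hgdef]; simp only [dif_neg h2]; exact hs₀
  refine ⟨Measure.map f G, Measure.isProbabilityMeasure_map hfmeas.aemeasurable, ?_, ?_⟩
  · rw [Measure.map_apply hfmeas]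
    · have : f ⁻¹' Sᶜ = ∅ := by
        ext v
        simp only [Set.mem_preimage, Set.mem_compl_iff, Set.mem_empty_iff_false,
          iff_false, not_not]
        exact hfS v
      rw [this]; exact measure_empty
    · exact (((Set.finite_range x).union (Set.finite_range Winvx)).measurableSet).compl
  · apply mul_le_mul'
    · apply Finset.prod_le_prod'
      intro i _
      rw [Measure.map_apply hfmeas (measurableSet_singleton _)]
      apply measure_mono
      intro v hv
      simp only [Set.mem_singleton_iff] at hv
      simp only [Set.mem_preimage, Set.mem_singleton_iff, hv, hfx i]
    · apply Finset.prod_le_prod'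
      intro j _
      rw [hA j]
      set a := Winv j with hadef
      -- measurable version of the integrand
      set Wt : ℝ → ℝ := fun v => if v ≤ a then W a else W v with hWtdef
      have hWtmono : Monotone Wt := by
        intro u v huv
        rw [hWtdef]
        by_cases hu : u ≤ a
        · by_cases hv : v ≤ a
          · simp [hu, hv]
          · push_neg at hv
            simp only [if_pos hu, if_neg (not_le.2 hv)]
            exact hWmono (Set.mem_Ioi.2 (hWinv_pos j)) (Set.mem_Ioi.2 (lt_trans (hWinv_pos j) hv)) hv.le
        · push_neg at hu
          have hv : ¬ v ≤ a := not_le.2 (lt_of_lt_of_le hu huv)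
          simp only [if_neg (not_le.2 hu), if_neg hv]
          exact hWmono (Set.mem_Ioi.2 (lt_trans (hWinv_pos j) hu))
            (Set.mem_Ioi.2 (lt_trans (hWinv_pos j) (lt_of_lt_of_le hu huv))) huv
      set H : ℝ → ENNReal := (Set.Ici a).indicator fun v => ENNReal.ofReal (Wt v)⁻¹
        with hHdef
      have hHmeas : Measurable H := by
        apply Measurable.indicator _ measurableSet_Ici
        exact ENNReal.measurable_ofReal.comp (hWtmono.measurable).inv
      have hHeq : H = (Set.Ici a).indicator fun v => ENNReal.ofReal (W v)⁻¹ := by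
        apply Set.indicator_congr
        intro v hv
        rw [hWtdef]
        rcases eq_or_lt_of_le (Set.mem_Ici.1 hv) with h | h
        · simp [← h]
        · simp [if_neg (not_le.2 h)]
      -- pointwise bound
      have hpt : ∀ v, H v ≤ H (f v) := by
        intro v
        by_cases hv : v ∈ Set.Ici a
        · have hv0 : 0 < v := lt_of_lt_of_le (hWinv_pos j) (Set.mem_Ici.1 hv)
          rw [hHeq, Set.indicator_of_mem hv]
          by_cases hvx : v ∈ Set.range x
          · rw [hfdef]; simp only [if_pos hvx]
            rw [Set.indicator_of_mem hv]
          · have hk : ∃ k : Fin n, Winv k ≤ v := ⟨j, Set.mem_Ici.1 hv⟩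
            have hfv : f v = Winvx (hex v hk).choose := by
              rw [hfdef]; simp only [if_neg hvx]
              exact hgD _ _ (hgmax v hk)
            set k := (hex v hk).choose with hkdef
            have hspec := (hex v hk).choose_spec
            have hjk : Winv j ≤ Winv k := hspec.2 j (Set.mem_Ici.1 hv)
            have hfv_mem : f v ∈ Set.Ici a := by
              rw [hfv]
              exact Set.mem_Ici.2 (le_trans hjk (hWinvx_ge k))
            rw [Set.indicator_of_mem hfv_mem]
            apply ENNReal.ofReal_le_ofReal
            apply inv_anti₀
            · rw [hfv, hWinvx_W k]
              exact hWpos _ (hWinv_pos k)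
            · rw [hfv, hWinvx_W k]
              exact hWmono (Set.mem_Ioi.2 (hWinv_pos k)) (Set.mem_Ioi.2 hv0) hspec.1
        · rw [hHeq, Set.indicator_of_notMem hv]
          exact zero_le
      calc ∫⁻ v in Set.Ici a, ENNReal.ofReal (W v)⁻¹ ∂G
          = ∫⁻ v, H v ∂G := by rw [hHeq, lintegral_indicator measurableSet_Ici]
        _ ≤ ∫⁻ v, H (f v) ∂G := lintegral_mono hpt
        _ = ∫⁻ v, H v ∂(Measure.map f G) := (lintegral_map hHmeas hfmeas).symm
        _ = ∫⁻ v in Set.Ici a, ENNReal.ofReal (W v)⁻¹ ∂(Measure.map f G) := by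
            rw [hHeq, lintegral_indicator measurableSet_Ici]
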